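/- First claim of Theorem 4 (attitude error formula and inverse proportionality to the internal force): let w, ū ∈ ℝ³ be unit vectors, L > 0, g > 0, t ≠ 0, ξ ∈ ℝ. If the equilibrium alignment condition w × (ξ·g·e₃ + L·t·ū) = 0 holds, then the load attitude error e_R := ‖w × ū‖² satisfies e_R = (ξ·g/(L·t))²·‖w × e₃‖² = (ξ·g/(L·t))²·(1 − ⟨w, e₃⟩²). In particular, for fixed ξ, g, L and fixed equilibrium inclination ⟨w, e₃⟩, the attitude error is inversely proportional to t². -/

import Mathlib

open scoped RealInnerProductSpace

/-- Cross product on `EuclideanSpace ℝ (Fin 3)`. -/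
noncomputable def cross3 (a b : EuclideanSpace ℝ (Fin 3)) : EuclideanSpace ℝ (Fin 3) :=
  WithLp.toLp 2 ![a 1 * b 2 - a 2 * b 1, a 2 * b 0 - a 0 * b 2, a 0 * b 1 - a 1 * b 0]

/-- The vertical unit vector `e₃`. -/
noncomputable def e3 : EuclideanSpace ℝ (Fin 3) := WithLp.toLp 2 ![0, 0, 1]

lemma norm_sq3 (x : EuclideanSpace ℝ (Fin 3)) : ‖x‖ ^ 2 = x 0 ^ 2 + x 1 ^ 2 + x 2 ^ 2 := by
  rw [EuclideanSpace.norm_eq, Real.sq_sqrt (by positivity)]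
  simp [Fin.sum_univ_three, Real.norm_eq_abs, sq_abs]

/-- first claim of Theorem 4: if the equilibrium alignment condition
`w × (ξ g e₃ + L t ū) = 0` holds, then the attitude error `e_R = ‖w × ū‖²` equals
`(ξ g/(L t))² ‖w × e₃‖² = (ξ g/(L t))² (1 − ⟨w, e₃⟩²)`; in particular it is inversely
proportional to `t²`. -/
theorem attitude_error_formula
    (g ξ L t : ℝ) (hg : 0 < g) (hL : 0 < L) (ht : t ≠ 0)
    (w ubar : EuclideanSpace ℝ (Fin 3)) (hw : ‖w‖ = 1) (hubar : ‖ubar‖ = 1)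
    (halign : cross3 w ((ξ * g) • e3 + (L * t) • ubar) = 0) :
    ‖cross3 w ubar‖ ^ 2 = (ξ * g / (L * t)) ^ 2 * ‖cross3 w e3‖ ^ 2 ∧
    ‖cross3 w ubar‖ ^ 2 = (ξ * g / (L * t)) ^ 2 * (1 - ⟪w, e3⟫ ^ 2) := by
  have hLt : L * t ≠ 0 := mul_ne_zero hL.ne' ht
  have h0 := congrArg (fun v => v 0) halign
  have h1 := congrArg (fun v => v 1) halign
  have h2 := congrArg (fun v => v 2) halign
  simp [cross3, e3, PiLp.add_apply, PiLp.smul_apply, smul_eq_mul] at h0 h1 h2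
  have hw2 : w 0 ^ 2 + w 1 ^ 2 + w 2 ^ 2 = 1 := by
    have := norm_sq3 w; rw [hw] at this; linarith
  have hin : ⟪w, e3⟫ = w 2 := by
    simp [PiLp.inner_apply, e3, Fin.sum_univ_three]
  have e0 : w 1 * ubar 2 - w 2 * ubar 1 = -(ξ * g / (L * t)) * w 1 := by
    field_simp
    nlinarith [h0]
  have e1 : w 2 * ubar 0 - w 0 * ubar 2 = (ξ * g / (L * t)) * w 0 := by
    field_simp
    nlinarith [h1]
  have e2 : w 0 * ubar 1 - w 1 * ubar 0 = 0 := by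
    have h2' : (L * t) * (w 0 * ubar 1 - w 1 * ubar 0) = 0 := by linear_combination h2
    rcases mul_eq_zero.mp h2' with h | h
    · exact absurd h hLt
    · exact h
  constructor
  · rw [norm_sq3, norm_sq3]
    simp only [cross3, e3, Matrix.cons_val_zero, Matrix.cons_val_one, Matrix.head_cons,
      Matrix.cons_val_two, Matrix.tail_cons]
    rw [e0, e1, e2]  -- may need massaging
    ring
  · rw [norm_sq3, hin]
    simp only [cross3, Matrix.cons_val_zero, Matrix.cons_val_one, Matrix.head_cons,
      Matrix.cons_val_two, Matrix.tail_cons]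
    rw [e0, e1, e2]
    nlinarith [hw2]
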